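/- Let G be a finite simple graph with no isolated vertices that contains an edge e incident with a vertex of degree at most 2. If G' is obtained from G by subdividing the edge e any number of times, then F_t(G) = F_t(G'). -/

import Mathlib

/-! Basic definitions: (zero) forcing, total forcing, forcing numbers. -/

namespace TotalForcing

variable {V : Type*}

/-- The set of vertices eventually colored by the forcing process starting from `S`:
a vertex is colored if it is in `S`, or if some colored vertex `u` is adjacent to it
while all other neighbors of `u` are already colored (so `v` is the unique
non-colored neighbor of `u`, and `u` forces `v`). -/
inductive Forces (G : SimpleGraph V) (S : Set V) : V → Prop
  | mem : ∀ {v : V}, v ∈ S → Forces G S v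
  | force : ∀ {u v : V}, G.Adj u v → Forces G S u →
      (∀ w, G.Adj u w → w ≠ v → Forces G S w) → Forces G S v

/-- `S` is a forcing set of `G` if the forcing process colors every vertex. -/
def IsForcingSet (G : SimpleGraph V) (S : Set V) : Prop := ∀ v : V, Forces G S v

/-- A total forcing set is a forcing set inducing a subgraph without isolated vertices. -/
def IsTotalForcingSet (G : SimpleGraph V) (S : Set V) : Prop :=
  IsForcingSet G S ∧ ∀ v ∈ S, ∃ u ∈ S, G.Adj v u

/-- The forcing number `F(G)`. -/
noncomputable def forcingNumber (G : SimpleGraph V) [Fintype V] : ℕ :=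
  sInf {n : ℕ | ∃ S : Finset V, S.card = n ∧ IsForcingSet G ↑S}

/-- The total forcing number `F_t(G)`. -/
noncomputable def totalForcingNumber (G : SimpleGraph V) [Fintype V] : ℕ :=
  sInf {n : ℕ | ∃ S : Finset V, S.card = n ∧ IsTotalForcingSet G ↑S}

/-- A leaf is a vertex of degree 1. -/
def IsLeaf (G : SimpleGraph V) (v : V) : Prop := (G.neighborSet v).ncard = 1

/-- The number of leaves of `G`. -/
noncomputable def numLeaves (G : SimpleGraph V) : ℕ := {v : V | IsLeaf G v}.ncard

/-- A strong support vertex is a vertex with at least two leaf neighbors. -/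
def IsStrongSupport (G : SimpleGraph V) (v : V) : Prop :=
  ∃ x y : V, x ≠ y ∧ G.Adj v x ∧ G.Adj v y ∧ IsLeaf G x ∧ IsLeaf G y

end TotalForcing

namespace TotalForcing

/-- The graph obtained from `G` by subdividing the edge `uv` by `m ≥ 1` new vertices:
the edge `uv` is deleted and replaced by the path
`u – inr 0 – inr 1 – ⋯ – inr (m-1) – v`. -/
def subdivideEdge {V : Type*} (G : SimpleGraph V) (u v : V) (m : ℕ) :
    SimpleGraph (V ⊕ Fin m) :=
  SimpleGraph.fromRel (fun x y =>
    (∃ a b : V, x = Sum.inl a ∧ y = Sum.inl b ∧ G.Adj a b ∧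
      ¬(a = u ∧ b = v) ∧ ¬(a = v ∧ b = u)) ∨
    (∃ i j : Fin m, x = Sum.inr i ∧ y = Sum.inr j ∧ (i : ℕ) + 1 = (j : ℕ)) ∨
    (∃ i : Fin m, x = Sum.inl u ∧ y = Sum.inr i ∧ (i : ℕ) = 0) ∨
    (∃ i : Fin m, x = Sum.inl v ∧ y = Sum.inr i ∧ (i : ℕ) = m - 1))

end TotalForcing

namespace TotalForcing

/-! basic lemmas -/

theorem forces_trans {G : SimpleGraph V} {S T : Set V} (h : ∀ x ∈ T, Forces G S x)
    {x : V} (hx : Forces G T x) : Forces G S x := by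
  induction hx with
  | mem h' => exact h _ h'
  | force hadj _ _ ihu ihn => exact .force hadj ihu ihn

theorem forces_map {W : Type*} {G : SimpleGraph V} {H : SimpleGraph W} (e : G ≃g H)
    {S : Set V} {x : V} (hx : Forces G S x) : Forces H (e '' S) (e x) := by
  induction hx with
  | mem h => exact .mem ⟨_, h, rfl⟩
  | @force a b hadj _ _ ihu ihn =>
    refine .force (e.map_adj_iff.2 hadj) ihu (fun w hw hne => ?_)
    have hadj' : G.Adj a (e.symm w) := by
      rw [← e.map_adj_iff, e.apply_symm_apply]; exact hw
    have hne' : e.symm w ≠ b := fun h => hne (by rw [← h, e.apply_symm_apply])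
    simpa using ihn (e.symm w) hadj' hne'

theorem isTotalForcingSet_map {W : Type*} {G : SimpleGraph V} {H : SimpleGraph W}
    (e : G ≃g H) {S : Set V} (h : IsTotalForcingSet G S) :
    IsTotalForcingSet H (e '' S) := by
  refine ⟨fun z => ?_, ?_⟩
  · have := forces_map e (h.1 (e.symm z))
    simpa using this
  · rintro z ⟨y, hy, rfl⟩
    obtain ⟨y', hy', hadj⟩ := h.2 y hy
    exact ⟨e y', ⟨y', hy', rfl⟩, e.map_adj_iff.2 hadj⟩

theorem totalForcingNumber_eq_of_iso {W : Type*} [Fintype V] [Fintype W]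
    {G : SimpleGraph V} {H : SimpleGraph W} (e : G ≃g H) :
    totalForcingNumber G = totalForcingNumber H := by
  unfold totalForcingNumber
  congr 1
  ext n
  constructor
  · rintro ⟨S, rfl, hS⟩
    refine ⟨S.map e.toEquiv.toEmbedding, Finset.card_map _, ?_⟩
    · have := isTotalForcingSet_map e hS
      rwa [Finset.coe_map]
  · rintro ⟨S, rfl, hS⟩
    refine ⟨S.map e.symm.toEquiv.toEmbedding, Finset.card_map _, ?_⟩
    · have := isTotalForcingSet_map e.symm hS
      rwa [Finset.coe_map]


section Adj

variable {V : Type*} {G : SimpleGraph V} {u v : V} {m : ℕ}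

open Sum

theorem adj_inl_inl {a b : V} :
    (subdivideEdge G u v m).Adj (inl a) (inl b) ↔
      G.Adj a b ∧ ¬(a = u ∧ b = v) ∧ ¬(a = v ∧ b = u) := by
  rw [subdivideEdge, SimpleGraph.fromRel_adj]
  simp only [Sum.inl.injEq, Sum.inr.injEq, reduceCtorEq, false_and, and_false,
    exists_false, or_false, false_or, ne_eq]
  constructor
  · rintro ⟨hne, ⟨a', b', rfl, rfl, h⟩ | ⟨a', b', rfl, rfl, h⟩⟩
    · exact h
    · exact ⟨h.1.symm, fun x => h.2.2 ⟨x.2, x.1⟩, fun x => h.2.1 ⟨x.2, x.1⟩⟩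
  · intro h
    exact ⟨fun he => G.irrefl (he ▸ h.1), Or.inl ⟨a, b, rfl, rfl, h⟩⟩

theorem adj_inl_inr {a : V} {i : Fin m} :
    (subdivideEdge G u v m).Adj (inl a) (inr i) ↔
      (a = u ∧ (i : ℕ) = 0) ∨ (a = v ∧ (i : ℕ) = m - 1) := by
  rw [subdivideEdge, SimpleGraph.fromRel_adj]
  simp only [Sum.inl.injEq, Sum.inr.injEq, reduceCtorEq, false_and, and_false,
    exists_false, or_false, false_or, ne_eq, not_false_iff, true_and]
  constructor
  · rintro (⟨i', rfl, rfl, h⟩ | ⟨i', rfl, rfl, h⟩)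
    · exact Or.inl ⟨rfl, h⟩
    · exact Or.inr ⟨rfl, h⟩
  · rintro (⟨rfl, h⟩ | ⟨rfl, h⟩)
    · exact Or.inl ⟨i, rfl, rfl, h⟩
    · exact Or.inr ⟨i, rfl, rfl, h⟩

theorem adj_inr_inl {a : V} {i : Fin m} :
    (subdivideEdge G u v m).Adj (inr i) (inl a) ↔
      (a = u ∧ (i : ℕ) = 0) ∨ (a = v ∧ (i : ℕ) = m - 1) := by
  rw [(subdivideEdge G u v m).adj_comm, adj_inl_inr]

theorem adj_inr_inr {i j : Fin m} :
    (subdivideEdge G u v m).Adj (inr i) (inr j) ↔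
      ((i : ℕ) + 1 = j ∨ (j : ℕ) + 1 = i) := by
  rw [subdivideEdge, SimpleGraph.fromRel_adj]
  simp only [Sum.inl.injEq, Sum.inr.injEq, reduceCtorEq, false_and, and_false,
    exists_false, or_false, false_or, ne_eq]
  constructor
  · rintro ⟨hne, ⟨i', j', rfl, rfl, h⟩ | ⟨i', j', rfl, rfl, h⟩⟩
    · exact Or.inl h
    · exact Or.inr h
  · rintro (h | h)
    · exact ⟨fun he => by cases he; omega, Or.inl ⟨i, j, rfl, rfl, h⟩⟩
    · exact ⟨fun he => by cases he; omega, Or.inr ⟨j, i, rfl, rfl, h⟩⟩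

end Adj


section Chain

open Sum

variable {V : Type*} {G : SimpleGraph V} {u v : V} {m : ℕ} {T : Set (V ⊕ Fin m)}

theorem chain_up' (huv : G.Adj u v) (hm : 0 < m)
    (h0 : Forces (subdivideEdge G u v m) T (inr ⟨0, hm⟩))
    (hu : Forces (subdivideEdge G u v m) T (inl u)) :
    (∀ i : Fin m, Forces (subdivideEdge G u v m) T (inr i)) ∧
      Forces (subdivideEdge G u v m) T (inl v) := by
  have key : ∀ k, ∀ hk : k < m, Forces (subdivideEdge G u v m) T (inr ⟨k, hk⟩) := by
    intro k
    induction k using Nat.strong_induction_on with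
    | _ k ih =>
      intro hk
      match k with
      | 0 => exact h0
      | (k+1) =>
        have hk' : k < m := by omega
        refine .force (u := inr ⟨k, hk'⟩) (adj_inr_inr.2 (Or.inl (by simp))) (ih k (by omega) hk') ?_
        rintro (b | j) hadj hne
        · rw [adj_inr_inl] at hadj
          rcases hadj with ⟨rfl, h⟩ | ⟨rfl, h⟩
          · exact hu
          · simp only [Fin.val_mk] at h; omega
        · rw [adj_inr_inr] at hadj
          rcases hadj with h | h
          · simp only [Fin.val_mk] at h
            exact absurd (congrArg inr (Fin.ext (by simp [← h]))) hne
          · simp only [Fin.val_mk] at h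
            have hj : j = ⟨j.val, j.isLt⟩ := by apply Fin.ext; simp
            rw [hj]
            exact ih j.val (by omega) j.isLt
  have hall : ∀ i : Fin m, Forces (subdivideEdge G u v m) T (inr i) := by
    intro i
    have := key i.val i.isLt
    have hi : i = ⟨i.val, i.isLt⟩ := by apply Fin.ext; simp
    rw [hi]; exact this
  refine ⟨hall, ?_⟩
  refine .force (u := inr ⟨m-1, by omega⟩) (adj_inr_inl.2 (Or.inr ⟨rfl, rfl⟩)) (hall _) ?_
  rintro (b | j) hadj hne
  · rw [adj_inr_inl] at hadj
    rcases hadj with ⟨rfl, h⟩ | ⟨rfl, h⟩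
    · exact hu
    · exact absurd rfl hne
  · exact hall j

theorem chain_down' (huv : G.Adj u v) (hm : 0 < m)
    (hlast : Forces (subdivideEdge G u v m) T (inr ⟨m-1, by omega⟩))
    (hv : Forces (subdivideEdge G u v m) T (inl v)) :
    (∀ i : Fin m, Forces (subdivideEdge G u v m) T (inr i)) ∧
      Forces (subdivideEdge G u v m) T (inl u) := by
  have key : ∀ k, k < m → ∀ hk : m - 1 - k < m, Forces (subdivideEdge G u v m) T (inr ⟨m-1-k, hk⟩) := by
    intro k
    induction k using Nat.strong_induction_on with
    | _ k ih =>
      intro hkm hk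
      match k with
      | 0 => exact hlast
      | (k+1) =>
        refine .force (u := inr ⟨m-1-k, by omega⟩) (adj_inr_inr.2 (Or.inr (by simp; omega)))
          (ih k (by omega) (by omega) (by omega)) ?_
        rintro (b | j) hadj hne
        · rw [adj_inr_inl] at hadj
          rcases hadj with ⟨rfl, h⟩ | ⟨rfl, h⟩
          · simp only [Fin.val_mk] at h; omega
          · exact hv
        · rw [adj_inr_inr] at hadj
          rcases hadj with h | h
          · -- (m-1-k)+1 = j, so j = m-k and k ≥ 1
            simp only [Fin.val_mk] at h
            have hjlt := j.isLt
            have hj : j = ⟨m-1-(k-1), by omega⟩ := by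
              apply Fin.ext; simp only [Fin.val_mk]; omega
            rw [hj]
            exact ih (k-1) (by omega) (by omega) (by omega)
          · -- j+1 = m-1-k, so j = m-1-(k+1), the target
            simp only [Fin.val_mk] at h
            exact absurd (congrArg inr (Fin.ext (by simp only [Fin.val_mk]; omega))) hne
  have hall : ∀ i : Fin m, Forces (subdivideEdge G u v m) T (inr i) := by
    intro i
    have := key (m - 1 - i.val) (by omega) (by omega)
    have hi : i = ⟨m - 1 - (m - 1 - i.val), by omega⟩ := by
      apply Fin.ext; simp only [Fin.val_mk]; omega
    rw [hi]; exact this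
  refine ⟨hall, ?_⟩
  refine .force (u := inr ⟨0, hm⟩) (adj_inr_inl.2 (Or.inl ⟨rfl, rfl⟩)) (hall _) ?_
  rintro (b | j) hadj hne
  · rw [adj_inr_inl] at hadj
    rcases hadj with ⟨rfl, h⟩ | ⟨rfl, h⟩
    · exact absurd rfl hne
    · exact hv
  · exact hall j

theorem chain_up (huv : G.Adj u v) (hm : 0 < m)
    (hu : Forces (subdivideEdge G u v m) T (inl u))
    (hnb : ∀ b, G.Adj u b → b ≠ v → Forces (subdivideEdge G u v m) T (inl b)) :
    (∀ i : Fin m, Forces (subdivideEdge G u v m) T (inr i)) ∧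
      Forces (subdivideEdge G u v m) T (inl v) := by
  refine chain_up' huv hm ?_ hu
  refine .force (u := inl u) (adj_inl_inr.2 (Or.inl ⟨rfl, rfl⟩)) hu ?_
  rintro (b | j) hadj hne
  · rw [adj_inl_inl] at hadj
    exact hnb b hadj.1 (fun e => hadj.2.1 ⟨rfl, e⟩)
  · rw [adj_inl_inr] at hadj
    rcases hadj with ⟨_, h⟩ | ⟨h, _⟩
    · exact absurd (congrArg inr (Fin.ext (by simpa using h))) hne
    · exact absurd h huv.ne

theorem chain_down (huv : G.Adj u v) (hm : 0 < m)
    (hv : Forces (subdivideEdge G u v m) T (inl v))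
    (hnb : ∀ b, G.Adj v b → b ≠ u → Forces (subdivideEdge G u v m) T (inl b)) :
    (∀ i : Fin m, Forces (subdivideEdge G u v m) T (inr i)) ∧
      Forces (subdivideEdge G u v m) T (inl u) := by
  refine chain_down' huv hm ?_ hv
  refine .force (u := inl v) (adj_inl_inr.2 (Or.inr ⟨rfl, rfl⟩)) hv ?_
  rintro (b | j) hadj hne
  · rw [adj_inl_inl] at hadj
    exact hnb b hadj.1 (fun e => hadj.2.2 ⟨rfl, e⟩)
  · rw [adj_inl_inr] at hadj
    rcases hadj with ⟨h, _⟩ | ⟨_, h⟩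
    · exact absurd h.symm huv.ne
    · exact absurd (congrArg inr (Fin.ext (by simpa using h))) hne

end Chain


section Sim

open Sum

variable {V : Type*} {G : SimpleGraph V} {u v : V} {m : ℕ} {T : Set (V ⊕ Fin m)}

theorem simulate (huv : G.Adj u v) {S : Set V}
    (hu : Forces (subdivideEdge G u v m) T (inl u))
    (hv : Forces (subdivideEdge G u v m) T (inl v))
    (hw : ∀ i : Fin m, Forces (subdivideEdge G u v m) T (inr i))
    (hS : ∀ x ∈ S, Forces (subdivideEdge G u v m) T (inl x))
    {x : V} (hx : Forces G S x) : Forces (subdivideEdge G u v m) T (inl x) := by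
  induction hx with
  | mem h => exact hS _ h
  | @force c x hadj hc hnb ihc ihnb =>
    by_cases hcu : c = u
    · rcases hcu.symm with rfl
      by_cases hxv : x = v
      · exact hxv ▸ hv
      · have hA : (subdivideEdge G u v m).Adj (inl u) (inl x) :=
          adj_inl_inl.2 ⟨hadj, fun e => hxv e.2, fun e => huv.ne e.1⟩
        refine .force hA ihc ?_
        rintro (b | j) hadj' hne
        · rw [adj_inl_inl] at hadj'
          exact ihnb b hadj'.1 (fun e => hne (congrArg inl e))
        · exact hw j
    · by_cases hcv : c = v
      · rcases hcv.symm with rfl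
        by_cases hxu : x = u
        · exact hxu ▸ hu
        · have hA : (subdivideEdge G u v m).Adj (inl v) (inl x) :=
            adj_inl_inl.2 ⟨hadj, fun e => huv.ne e.1.symm, fun e => hxu e.2⟩
          refine .force hA ihc ?_
          rintro (b | j) hadj' hne
          · rw [adj_inl_inl] at hadj'
            exact ihnb b hadj'.1 (fun e => hne (congrArg inl e))
          · exact hw j
      · have hA : (subdivideEdge G u v m).Adj (inl c) (inl x) :=
          adj_inl_inl.2 ⟨hadj, fun e => hcu e.1, fun e => hcv e.1⟩
        refine .force hA ihc ?_
        rintro (b | j) hadj' hne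
        · rw [adj_inl_inl] at hadj'
          exact ihnb b hadj'.1 (fun e => hne (congrArg inl e))
        · rw [adj_inl_inr] at hadj'
          rcases hadj' with ⟨e, _⟩ | ⟨e, _⟩
          exacts [absurd e hcu, absurd e hcv]

theorem lemA1 (huv : G.Adj u v) (hm : 0 < m)
    (hdeg : ∀ a b, G.Adj u a → G.Adj u b → a ≠ v → b ≠ v → a = b)
    {S : Set V} (huS : u ∉ S) {x : V} (hx : Forces G S x) :
    Forces (subdivideEdge G u v m) (inl '' S) (inl x) ∧
      (x = u → ∀ i : Fin m, Forces (subdivideEdge G u v m) (inl '' S) (inr i)) := by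
  induction hx with
  | mem h => exact ⟨.mem ⟨_, h, rfl⟩, fun hxu => absurd (hxu ▸ h) huS⟩
  | @force c x hadj hc hnb ihc ihnb =>
    by_cases hcu : c = u
    · rcases hcu.symm with rfl
      by_cases hxv : x = v
      · rcases hxv.symm with rfl
        have hch := chain_up huv hm ihc.1 (fun b hb hbv => (ihnb b hb hbv).1)
        exact ⟨hch.2, fun h => absurd h.symm huv.ne⟩
      · have hx' : Forces (subdivideEdge G u v m) (inl '' S) (inl x) := by
          have hA : (subdivideEdge G u v m).Adj (inl u) (inl x) :=
            adj_inl_inl.2 ⟨hadj, fun e => hxv e.2, fun e => huv.ne e.1⟩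
          refine .force hA ihc.1 ?_
          rintro (b | j) hadj' hne
          · rw [adj_inl_inl] at hadj'
            exact (ihnb b hadj'.1 (fun e => hne (congrArg inl e))).1
          · exact ihc.2 rfl j
        exact ⟨hx', fun hxu => (G.irrefl (hxu ▸ hadj)).elim⟩
    · by_cases hcv : c = v
      · rcases hcv.symm with rfl
        by_cases hxu : x = u
        · rcases hxu.symm with rfl
          have hch := chain_down huv hm ihc.1 (fun b hb hbu => (ihnb b hb hbu).1)
          exact ⟨hch.2, fun _ => hch.1⟩
        · have hiw := (ihnb u huv.symm (fun e => hxu e.symm)).2 rfl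
          have hx' : Forces (subdivideEdge G u v m) (inl '' S) (inl x) := by
            have hA : (subdivideEdge G u v m).Adj (inl v) (inl x) :=
              adj_inl_inl.2 ⟨hadj, fun e => huv.ne e.1.symm, fun e => hxu e.2⟩
            refine .force hA ihc.1 ?_
            rintro (b | j) hadj' hne
            · rw [adj_inl_inl] at hadj'
              exact (ihnb b hadj'.1 (fun e => hne (congrArg inl e))).1
            · exact hiw j
          exact ⟨hx', fun h => absurd h hxu⟩
      · have hx' : Forces (subdivideEdge G u v m) (inl '' S) (inl x) := by
          have hA : (subdivideEdge G u v m).Adj (inl c) (inl x) :=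
            adj_inl_inl.2 ⟨hadj, fun e => hcu e.1, fun e => hcv e.1⟩
          refine .force hA ihc.1 ?_
          rintro (b | j) hadj' hne
          · rw [adj_inl_inl] at hadj'
            exact (ihnb b hadj'.1 (fun e => hne (congrArg inl e))).1
          · rw [adj_inl_inr] at hadj'
            rcases hadj' with ⟨e, _⟩ | ⟨e, _⟩
            exacts [absurd e hcu, absurd e hcv]
        refine ⟨hx', fun hxu => ?_⟩
        rcases hxu.symm with rfl
        have hnb' : ∀ b, G.Adj u b → b ≠ v →
            Forces (subdivideEdge G u v m) (inl '' S) (inl b) := by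
          intro b hb hbv
          have : b = c := hdeg b c hb hadj.symm hbv hcv
          exact this ▸ ihc.1
        exact (chain_up huv hm hx' hnb').1

end Sim


section DirA

open Sum

variable {V : Type*} {G : SimpleGraph V} {u v : V} {m : ℕ}

theorem dirA (huv : G.Adj u v) (hm : 0 < m)
    (hdeg : ∀ a b, G.Adj u a → G.Adj u b → a ≠ v → b ≠ v → a = b)
    (S : Finset V) (hTF : IsTotalForcingSet G ↑S) :
    ∃ S' : Finset (V ⊕ Fin m), S'.card ≤ S.card ∧
      IsTotalForcingSet (subdivideEdge G u v m) ↑S' := by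
  classical
  by_cases huS : u ∈ S
  swap
  · -- CASE 1 : u ∉ S
    refine ⟨S.image inl, Finset.card_image_le, ?_, ?_⟩
    · intro z
      rw [Finset.coe_image]
      have huS' : u ∉ (↑S : Set V) := by simpa using huS
      cases z with
      | inl a => exact (lemA1 huv hm hdeg huS' (hTF.1 a)).1
      | inr i => exact (lemA1 huv hm hdeg huS' (hTF.1 u)).2 rfl i
    · intro z hz
      simp only [Finset.coe_image, Set.mem_image, Finset.mem_coe] at hz
      obtain ⟨a, haS, rfl⟩ := hz
      obtain ⟨b, hbS, hab⟩ := hTF.2 a haS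
      refine ⟨inl b, ?_, ?_⟩
      · simp only [Finset.coe_image, Set.mem_image, Finset.mem_coe]
        exact ⟨b, hbS, rfl⟩
      · exact adj_inl_inl.2 ⟨hab, fun e => huS (e.1 ▸ haS), fun e => huS (e.2 ▸ hbS)⟩
  by_cases hvS : v ∈ S
  swap
  · -- CASE 2 : u ∈ S, v ∉ S
    obtain ⟨y, hyS, hyadj⟩ := hTF.2 u huS
    have hyv : y ≠ v := fun e => hvS (e ▸ hyS)
    set S' : Finset (V ⊕ Fin m) := S.image inl with hS'def
    refine ⟨S', Finset.card_image_le, ?_, ?_⟩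
    · have hmem : ∀ x ∈ S, Forces (subdivideEdge G u v m) (↑S') (inl x) := by
        intro x hx
        refine .mem ?_
        simp only [hS'def, Finset.coe_image, Set.mem_image, Finset.mem_coe]
        exact ⟨x, hx, rfl⟩
      have hu0 := hmem u huS
      have hnbS : ∀ b, G.Adj u b → b ≠ v →
          Forces (subdivideEdge G u v m) (↑S') (inl b) := by
        intro b hb hbv
        have : b = y := hdeg b y hb hyadj hbv hyv
        exact this ▸ hmem y hyS
      have hch := chain_up huv hm hu0 hnbS
      intro z
      cases z with
      | inl a => exact simulate huv hu0 hch.2 hch.1 (fun x hx => hmem x (by simpa using hx)) (hTF.1 a)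
      | inr i => exact hch.1 i
    · intro z hz
      simp only [hS'def] at hz
      simp only [Finset.coe_image, Set.mem_image, Finset.mem_coe] at hz
      obtain ⟨a, haS, rfl⟩ := hz
      obtain ⟨b, hbS, hab⟩ := hTF.2 a haS
      refine ⟨inl b, ?_, ?_⟩
      · simp only [hS'def, Finset.coe_image, Set.mem_image, Finset.mem_coe]
        exact ⟨b, hbS, rfl⟩
      · exact adj_inl_inl.2 ⟨hab, fun e => hvS (e.2 ▸ hbS), fun e => hvS (e.1 ▸ haS)⟩
  by_cases hC : ∃ z ∈ S, z ≠ v ∧ G.Adj z u ∧ ∀ y ∈ S, G.Adj z y → y = u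
  swap
  · -- CASE 3 : u, v ∈ S, no vertex hangs only on u
    push_neg at hC
    have hvu : v ≠ u := huv.ne'
    set S' : Finset (V ⊕ Fin m) :=
      (S.erase u).image inl ∪ {inr ⟨m - 1, by omega⟩} with hS'def
    have hmemL : ∀ x, x ∈ S → x ≠ u → (inl x : V ⊕ Fin m) ∈ (↑S' : Set (V ⊕ Fin m)) := by
      intro x hx hxu
      simp only [hS'def, Finset.coe_union, Finset.coe_image, Finset.coe_singleton,
        Set.mem_union, Set.mem_image, Finset.mem_coe, Set.mem_singleton_iff]
      exact Or.inl ⟨x, Finset.mem_erase.2 ⟨hxu, hx⟩, rfl⟩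
    have hmemR : (inr ⟨m - 1, by omega⟩ : V ⊕ Fin m) ∈ (↑S' : Set (V ⊕ Fin m)) := by
      simp only [hS'def, Finset.coe_union, Finset.coe_singleton, Set.mem_union,
        Set.mem_singleton_iff]
      exact Or.inr trivial
    refine ⟨S', ?_, ?_, ?_⟩
    · refine le_trans (Finset.card_union_le _ _) ?_
      rw [Finset.card_singleton, Finset.card_image_of_injective _ Sum.inl_injective,
        Finset.card_erase_of_mem huS]
      have : 1 ≤ S.card := Finset.card_pos.2 ⟨u, huS⟩
      omega
    · have hlast : Forces (subdivideEdge G u v m) (↑S') (inr ⟨m - 1, by omega⟩) :=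
        .mem hmemR
      have hv0 : Forces (subdivideEdge G u v m) (↑S') (inl v) := .mem (hmemL v hvS hvu)
      have hch := chain_down' huv hm hlast hv0
      have hSmem : ∀ x ∈ (↑S : Set V), Forces (subdivideEdge G u v m) (↑S') (inl x) := by
        intro x hx
        by_cases hxu : x = u
        · exact hxu ▸ hch.2
        · exact .mem (hmemL x (by simpa using hx) hxu)
      intro z
      cases z with
      | inl a => exact simulate huv hch.2 hv0 hch.1 hSmem (hTF.1 a)
      | inr i => exact hch.1 i
    · intro z hz
      simp only [hS'def, Finset.coe_union, Finset.coe_image, Finset.coe_singleton,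
        Set.mem_union, Set.mem_image, Finset.mem_coe, Set.mem_singleton_iff] at hz
      rcases hz with ⟨a, haE, rfl⟩ | rfl
      · obtain ⟨hau, haS⟩ := Finset.mem_erase.1 haE
        obtain ⟨y, hyS, hay⟩ := hTF.2 a haS
        by_cases hyu : y = u
        · by_cases hav : a = v
          · refine ⟨inr ⟨m - 1, by omega⟩, hmemR, ?_⟩
            exact adj_inl_inr.2 (Or.inr ⟨hav, rfl⟩)
          · obtain ⟨y', hy'S, hy'adj, hy'u⟩ := hC a haS hav (by rw [← hyu]; exact hay)
            exact ⟨inl y', hmemL y' hy'S hy'u,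
              adj_inl_inl.2 ⟨hy'adj, fun e => hau e.1, fun e => hy'u e.2⟩⟩
        · exact ⟨inl y, hmemL y hyS hyu,
            adj_inl_inl.2 ⟨hay, fun e => hau e.1, fun e => hyu e.2⟩⟩
      · exact ⟨inl v, hmemL v hvS hvu, adj_inr_inl.2 (Or.inr ⟨rfl, rfl⟩)⟩
  · -- CASE 4 : u, v ∈ S, some x0 ∈ S hangs only on u
    obtain ⟨x0, hx0S, hx0v, hx0adj, hx0only⟩ := hC
    have hx0u : x0 ≠ u := hx0adj.ne
    by_cases h4 : ∃ y ∈ S, y ≠ u ∧ G.Adj v y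
    · -- CASE 4a
      set S' : Finset (V ⊕ Fin m) :=
        (S.erase x0).image inl ∪ {inr ⟨0, hm⟩} with hS'def
      have hmemL : ∀ x, x ∈ S → x ≠ x0 → (inl x : V ⊕ Fin m) ∈ (↑S' : Set (V ⊕ Fin m)) := by
        intro x hx hxx0
        simp only [hS'def, Finset.coe_union, Finset.coe_image, Finset.coe_singleton,
          Set.mem_union, Set.mem_image, Finset.mem_coe, Set.mem_singleton_iff]
        exact Or.inl ⟨x, Finset.mem_erase.2 ⟨hxx0, hx⟩, rfl⟩
      have hmemR : (inr ⟨0, hm⟩ : V ⊕ Fin m) ∈ (↑S' : Set (V ⊕ Fin m)) := by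
        simp only [hS'def, Finset.coe_union, Finset.coe_singleton, Set.mem_union,
          Set.mem_singleton_iff]
        exact Or.inr trivial
      refine ⟨S', ?_, ?_, ?_⟩
      · refine le_trans (Finset.card_union_le _ _) ?_
        rw [Finset.card_singleton, Finset.card_image_of_injective _ Sum.inl_injective,
          Finset.card_erase_of_mem hx0S]
        have : 1 ≤ S.card := Finset.card_pos.2 ⟨u, huS⟩
        omega
      · have h00 : Forces (subdivideEdge G u v m) (↑S') (inr ⟨0, hm⟩) := .mem hmemR
        have hu0 : Forces (subdivideEdge G u v m) (↑S') (inl u) :=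
          .mem (hmemL u huS (Ne.symm hx0u))
        have hch := chain_up' huv hm h00 hu0
        have hx0f : Forces (subdivideEdge G u v m) (↑S') (inl x0) := by
          have hA : (subdivideEdge G u v m).Adj (inl u) (inl x0) :=
            adj_inl_inl.2 ⟨hx0adj.symm, fun e => hx0v e.2, fun e => huv.ne e.1⟩
          refine .force hA hu0 ?_
          rintro (b | j) hadj' hne
          · rw [adj_inl_inl] at hadj'
            have hbv : b ≠ v := fun e => hadj'.2.1 ⟨rfl, e⟩
            exact absurd (congrArg inl (hdeg b x0 hadj'.1 hx0adj.symm hbv hx0v)) hne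
          · exact hch.1 j
        have hSmem : ∀ x ∈ (↑S : Set V), Forces (subdivideEdge G u v m) (↑S') (inl x) := by
          intro x hx
          by_cases hxx0 : x = x0
          · exact hxx0 ▸ hx0f
          · exact .mem (hmemL x (by simpa using hx) hxx0)
        intro z
        cases z with
        | inl a => exact simulate huv hu0 hch.2 hch.1 hSmem (hTF.1 a)
        | inr i => exact hch.1 i
      · intro z hz
        simp only [hS'def, Finset.coe_union, Finset.coe_image, Finset.coe_singleton,
          Set.mem_union, Set.mem_image, Finset.mem_coe, Set.mem_singleton_iff] at hz
        rcases hz with ⟨a, haE, rfl⟩ | rfl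
        · obtain ⟨hax0, haS⟩ := Finset.mem_erase.1 haE
          by_cases hau : a = u
          · exact ⟨inr ⟨0, hm⟩, hmemR, adj_inl_inr.2 (Or.inl ⟨hau, rfl⟩)⟩
          · by_cases hav : a = v
            · obtain ⟨y, hyS, hyu, hvy⟩ := h4
              have hyx0 : y ≠ x0 := by
                intro e
                have : G.Adj x0 v := (e ▸ hvy).symm
                exact huv.ne (hx0only v hvS this).symm
              refine ⟨inl y, hmemL y hyS hyx0, ?_⟩
              exact adj_inl_inl.2 ⟨by rw [hav]; exact hvy, fun e => hau e.1,
                fun e => hyu e.2⟩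
            · obtain ⟨y, hyS, hay⟩ := hTF.2 a haS
              have hyx0 : y ≠ x0 := by
                intro e
                exact hau (hx0only a haS (e ▸ hay).symm)
              exact ⟨inl y, hmemL y hyS hyx0,
                adj_inl_inl.2 ⟨hay, fun e => hau e.1, fun e => hav e.1⟩⟩
        · exact ⟨inl u, hmemL u huS (Ne.symm hx0u), adj_inr_inl.2 (Or.inl ⟨rfl, rfl⟩)⟩
    · -- CASE 4b
      push_neg at h4
      set S' : Finset (V ⊕ Fin m) :=
        (S.erase v).image inl ∪ {inr ⟨0, hm⟩} with hS'def
      have hmemL : ∀ x, x ∈ S → x ≠ v → (inl x : V ⊕ Fin m) ∈ (↑S' : Set (V ⊕ Fin m)) := by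
        intro x hx hxv
        simp only [hS'def, Finset.coe_union, Finset.coe_image, Finset.coe_singleton,
          Set.mem_union, Set.mem_image, Finset.mem_coe, Set.mem_singleton_iff]
        exact Or.inl ⟨x, Finset.mem_erase.2 ⟨hxv, hx⟩, rfl⟩
      have hmemR : (inr ⟨0, hm⟩ : V ⊕ Fin m) ∈ (↑S' : Set (V ⊕ Fin m)) := by
        simp only [hS'def, Finset.coe_union, Finset.coe_singleton, Set.mem_union,
          Set.mem_singleton_iff]
        exact Or.inr trivial
      refine ⟨S', ?_, ?_, ?_⟩
      · refine le_trans (Finset.card_union_le _ _) ?_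
        rw [Finset.card_singleton, Finset.card_image_of_injective _ Sum.inl_injective,
          Finset.card_erase_of_mem hvS]
        have : 1 ≤ S.card := Finset.card_pos.2 ⟨u, huS⟩
        omega
      · have h00 : Forces (subdivideEdge G u v m) (↑S') (inr ⟨0, hm⟩) := .mem hmemR
        have hu0 : Forces (subdivideEdge G u v m) (↑S') (inl u) :=
          .mem (hmemL u huS huv.ne)
        have hch := chain_up' huv hm h00 hu0
        have hSmem : ∀ x ∈ (↑S : Set V), Forces (subdivideEdge G u v m) (↑S') (inl x) := by
          intro x hx
          by_cases hxv : x = v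
          · exact hxv ▸ hch.2
          · exact .mem (hmemL x (by simpa using hx) hxv)
        intro z
        cases z with
        | inl a => exact simulate huv hu0 hch.2 hch.1 hSmem (hTF.1 a)
        | inr i => exact hch.1 i
      · intro z hz
        simp only [hS'def, Finset.coe_union, Finset.coe_image, Finset.coe_singleton,
          Set.mem_union, Set.mem_image, Finset.mem_coe, Set.mem_singleton_iff] at hz
        rcases hz with ⟨a, haE, rfl⟩ | rfl
        · obtain ⟨hav, haS⟩ := Finset.mem_erase.1 haE
          by_cases hau : a = u
          · exact ⟨inr ⟨0, hm⟩, hmemR, adj_inl_inr.2 (Or.inl ⟨hau, rfl⟩)⟩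
          · obtain ⟨y, hyS, hay⟩ := hTF.2 a haS
            have hyv : y ≠ v := by
              intro e
              exact h4 a haS hau (e ▸ hay).symm
            exact ⟨inl y, hmemL y hyS hyv,
              adj_inl_inl.2 ⟨hay, fun e => hyv e.2, fun e => hav e.1⟩⟩
        · exact ⟨inl u, hmemL u huS huv.ne, adj_inr_inl.2 (Or.inl ⟨rfl, rfl⟩)⟩

end DirA


section DirB

open Sum

variable {V : Type*} {G : SimpleGraph V} {u v : V} {m : ℕ}

theorem lemB2 (huv : G.Adj u v) {S' : Set (V ⊕ Fin m)} {SA : Set V}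
    (hA : ∀ a, inl a ∈ S' → a ∈ SA) (hu : u ∈ SA) (hv : v ∈ SA)
    {z : V ⊕ Fin m} (hz : Forces (subdivideEdge G u v m) S' z) :
    ∀ a, z = inl a → Forces G SA a := by
  induction hz with
  | mem h => rintro a rfl; exact .mem (hA a h)
  | @force y z hadj hy hnb ihy ihnb =>
    rintro a rfl
    cases y with
    | inr i =>
      rw [adj_inr_inl] at hadj
      rcases hadj with ⟨rfl, _⟩ | ⟨rfl, _⟩
      · exact .mem hu
      · exact .mem hv
    | inl c =>
      rw [adj_inl_inl] at hadj
      by_cases hcu : c = u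
      · rcases hcu.symm with rfl
        refine .force hadj.1 (ihy u rfl) ?_
        intro w hw hwa
        by_cases hwv : w = v
        · exact hwv ▸ .mem hv
        · exact ihnb (inl w) (adj_inl_inl.2 ⟨hw, fun e => hwv e.2, fun e => huv.ne e.1⟩)
            (fun e => hwa (inl.inj e)) w rfl
      · by_cases hcv : c = v
        · rcases hcv.symm with rfl
          refine .force hadj.1 (ihy v rfl) ?_
          intro w hw hwa
          by_cases hwu : w = u
          · exact hwu ▸ .mem hu
          · exact ihnb (inl w)
              (adj_inl_inl.2 ⟨hw, fun e => huv.ne e.1.symm, fun e => hwu e.2⟩)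
              (fun e => hwa (inl.inj e)) w rfl
        · refine .force hadj.1 (ihy c rfl) ?_
          intro w hw hwa
          exact ihnb (inl w) (adj_inl_inl.2 ⟨hw, fun e => hcu e.1, fun e => hcv e.1⟩)
            (fun e => hwa (inl.inj e)) w rfl

theorem lemB1 (huv : G.Adj u v) (hm : 0 < m) {S' : Set (V ⊕ Fin m)}
    (hW : ∀ i : Fin m, inr i ∉ S')
    {z : V ⊕ Fin m} (hz : Forces (subdivideEdge G u v m) S' z) :
    (∀ a, z = inl a → Forces G (inl ⁻¹' S') a) ∧
    (∀ i : Fin m, z = inr i →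
      (Forces G (inl ⁻¹' S') u ∧ ∀ b, G.Adj u b → b ≠ v → Forces G (inl ⁻¹' S') b) ∨
      (Forces G (inl ⁻¹' S') v ∧ ∀ b, G.Adj v b → b ≠ u → Forces G (inl ⁻¹' S') b)) := by
  induction hz with
  | mem h =>
    refine ⟨?_, ?_⟩
    · rintro a rfl; exact .mem h
    · rintro i rfl; exact absurd h (hW i)
  | @force y z hadj hy hnb ihy ihnb =>
    constructor
    · rintro a rfl
      cases y with
      | inr i =>
        rw [adj_inr_inl] at hadj
        have hLR := ihy.2 i rfl
        rcases hadj with ⟨rfl, _⟩ | ⟨rfl, _⟩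
        · rcases hLR with hL | hR
          · exact hL.1
          · exact .force huv.symm hR.1 hR.2
        · rcases hLR with hL | hR
          · exact .force huv hL.1 hL.2
          · exact hR.1
      | inl c =>
        rw [adj_inl_inl] at hadj
        by_cases hcu : c = u
        · rcases hcu.symm with rfl
          have hav : a ≠ v := fun e => hadj.2.1 ⟨rfl, e⟩
          have h0 := ihnb (inr ⟨0, hm⟩) (adj_inl_inr.2 (Or.inl ⟨rfl, rfl⟩))
            (fun e => Sum.inr_ne_inl e)
          rcases h0.2 ⟨0, hm⟩ rfl with hL | hR
          · exact hL.2 a hadj.1 hav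
          · refine .force hadj.1 (ihy.1 u rfl) ?_
            intro w hw hwa
            by_cases hwv : w = v
            · exact hwv ▸ hR.1
            · exact (ihnb (inl w)
                (adj_inl_inl.2 ⟨hw, fun e => hwv e.2, fun e => huv.ne e.1⟩)
                (fun e => hwa (inl.inj e))).1 w rfl
        · by_cases hcv : c = v
          · rcases hcv.symm with rfl
            have hau : a ≠ u := fun e => hadj.2.2 ⟨rfl, e⟩
            have hlst := ihnb (inr ⟨m - 1, by omega⟩) (adj_inl_inr.2 (Or.inr ⟨rfl, rfl⟩))
              (fun e => Sum.inr_ne_inl e)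
            rcases hlst.2 ⟨m - 1, by omega⟩ rfl with hL | hR
            · refine .force hadj.1 (ihy.1 v rfl) ?_
              intro w hw hwa
              by_cases hwu : w = u
              · exact hwu ▸ hL.1
              · exact (ihnb (inl w)
                  (adj_inl_inl.2 ⟨hw, fun e => huv.ne e.1.symm, fun e => hwu e.2⟩)
                  (fun e => hwa (inl.inj e))).1 w rfl
            · exact hR.2 a hadj.1 hau
          · refine .force hadj.1 (ihy.1 c rfl) ?_
            intro w hw hwa
            exact (ihnb (inl w) (adj_inl_inl.2 ⟨hw, fun e => hcu e.1, fun e => hcv e.1⟩)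
              (fun e => hwa (inl.inj e))).1 w rfl
    · rintro i rfl
      cases y with
      | inl c =>
        rw [adj_inl_inr] at hadj
        rcases hadj with ⟨hcu, hi0⟩ | ⟨hcv, hilast⟩
        · left
          refine ⟨ihy.1 u (by rw [hcu]), fun b hb hbv => ?_⟩
          refine (ihnb (inl b) ?_ (fun e => Sum.inl_ne_inr e)).1 b rfl
          rw [hcu]
          exact adj_inl_inl.2 ⟨hb, fun e => hbv e.2, fun e => huv.ne e.1⟩
        · right
          refine ⟨ihy.1 v (by rw [hcv]), fun b hb hbu => ?_⟩
          refine (ihnb (inl b) ?_ (fun e => Sum.inl_ne_inr e)).1 b rfl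
          rw [hcv]
          exact adj_inl_inl.2 ⟨hb, fun e => huv.ne e.1.symm, fun e => hbu e.2⟩
      | inr i' =>
        exact ihy.2 i' rfl

theorem dirB (huv : G.Adj u v) (hm : 0 < m) (S' : Finset (V ⊕ Fin m))
    (hTF : IsTotalForcingSet (subdivideEdge G u v m) ↑S') :
    ∃ S : Finset V, S.card ≤ S'.card ∧ IsTotalForcingSet G ↑S := by
  classical
  by_cases hW : S'.toRight = ∅
  · refine ⟨S'.toLeft, Finset.card_toLeft_le, ?_, ?_⟩
    · have hWs : ∀ i : Fin m, (inr i : V ⊕ Fin m) ∉ (↑S' : Set (V ⊕ Fin m)) := by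
        intro i hi
        have : i ∈ S'.toRight := Finset.mem_toRight.2 (Finset.mem_coe.1 hi)
        rw [hW] at this
        exact absurd this (Finset.notMem_empty i)
      have hset : (↑S'.toLeft : Set V) = inl ⁻¹' (↑S' : Set (V ⊕ Fin m)) := by
        ext x
        simp only [Finset.mem_coe, Finset.mem_toLeft, Set.mem_preimage]
      intro a
      rw [hset]
      exact (lemB1 huv hm hWs (hTF.1 (inl a))).1 a rfl
    · intro a ha
      have haS : inl a ∈ S' := Finset.mem_toLeft.1 (Finset.mem_coe.1 ha)
      obtain ⟨y, hy, hady⟩ := hTF.2 (inl a) (Finset.mem_coe.2 haS)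
      cases y with
      | inr j =>
        exfalso
        have : j ∈ S'.toRight := Finset.mem_toRight.2 (Finset.mem_coe.1 hy)
        rw [hW] at this
        exact absurd this (Finset.notMem_empty j)
      | inl b =>
        refine ⟨b, ?_, (adj_inl_inl.1 hady).1⟩
        exact Finset.mem_coe.2 (Finset.mem_toLeft.2 (Finset.mem_coe.1 hy))
  · have hWne : S'.toRight.Nonempty := Finset.nonempty_of_ne_empty hW
    obtain ⟨j, hj⟩ := hWne
    have hjS : (inr j : V ⊕ Fin m) ∈ S' := Finset.mem_toRight.1 hj
    set SA : Finset V := S'.toLeft ∪ {u, v} with hSA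
    have hcards : S'.toLeft.card + S'.toRight.card = S'.card :=
      Finset.card_toLeft_add_card_toRight
    have huSA : u ∈ SA := by simp [hSA]
    have hvSA : v ∈ SA := by simp [hSA]
    refine ⟨SA, ?_, ?_, ?_⟩
    · by_cases huA : u ∈ S'.toLeft
      · by_cases hvA : v ∈ S'.toLeft
        · have : SA = S'.toLeft := by
            rw [hSA, Finset.union_eq_left]
            intro x hx
            simp only [Finset.mem_insert, Finset.mem_singleton] at hx
            rcases hx with rfl | rfl
            exacts [huA, hvA]
          rw [this]
          exact Finset.card_toLeft_le
        · have hsub : SA ⊆ S'.toLeft ∪ {v} := by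
            rw [hSA]
            intro x hx
            simp only [Finset.mem_union, Finset.mem_insert, Finset.mem_singleton] at hx ⊢
            rcases hx with hx | rfl | rfl
            exacts [Or.inl hx, Or.inl huA, Or.inr rfl]
          have h1 : SA.card ≤ S'.toLeft.card + 1 :=
            le_trans (Finset.card_le_card hsub) (le_trans (Finset.card_union_le _ _) (by simp))
          have h2 : 1 ≤ S'.toRight.card := Finset.card_pos.2 ⟨j, hj⟩
          omega
      · by_cases hvA : v ∈ S'.toLeft
        · have hsub : SA ⊆ S'.toLeft ∪ {u} := by
            rw [hSA]
            intro x hx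
            simp only [Finset.mem_union, Finset.mem_insert, Finset.mem_singleton] at hx ⊢
            rcases hx with hx | rfl | rfl
            exacts [Or.inl hx, Or.inr rfl, Or.inl hvA]
          have h1 : SA.card ≤ S'.toLeft.card + 1 :=
            le_trans (Finset.card_le_card hsub) (le_trans (Finset.card_union_le _ _) (by simp))
          have h2 : 1 ≤ S'.toRight.card := Finset.card_pos.2 ⟨j, hj⟩
          omega
        · -- neither endpoint is in S': the path must contain two vertices of S'
          obtain ⟨y, hy, hady⟩ := hTF.2 (inr j) (Finset.mem_coe.2 hjS)
          have h2 : 2 ≤ S'.toRight.card := by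
            cases y with
            | inl b =>
              exfalso
              rw [adj_inr_inl] at hady
              rcases hady with ⟨rfl, _⟩ | ⟨rfl, _⟩
              · exact huA (Finset.mem_toLeft.2 (Finset.mem_coe.1 hy))
              · exact hvA (Finset.mem_toLeft.2 (Finset.mem_coe.1 hy))
            | inr j' =>
              have hj' : j' ∈ S'.toRight := Finset.mem_toRight.2 (Finset.mem_coe.1 hy)
              have hne : j ≠ j' := by
                intro e
                rw [adj_inr_inr] at hady
                rcases hady with h | h <;> (rw [e] at h; omega)
              exact Finset.one_lt_card.2 ⟨j, hj, j', hj', hne⟩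
          have h1 : SA.card ≤ S'.toLeft.card + 2 :=
            le_trans (Finset.card_union_le _ _)
              (by
                have : ({u, v} : Finset V).card ≤ 2 :=
                  le_trans (Finset.card_insert_le _ _) (by simp)
                omega)
          omega
    · have hA : ∀ a, inl a ∈ (↑S' : Set (V ⊕ Fin m)) → a ∈ (↑SA : Set V) := by
        intro a ha
        have : a ∈ S'.toLeft := Finset.mem_toLeft.2 (Finset.mem_coe.1 ha)
        exact Finset.mem_coe.2 (Finset.mem_union_left _ this)
      intro a
      exact lemB2 huv hA (Finset.mem_coe.2 huSA) (Finset.mem_coe.2 hvSA)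
        (hTF.1 (inl a)) a rfl
    · intro a ha
      by_cases hau : a = u
      · exact ⟨v, Finset.mem_coe.2 hvSA, hau ▸ huv⟩
      · by_cases hav : a = v
        · exact ⟨u, Finset.mem_coe.2 huSA, hav ▸ huv.symm⟩
        · have haL : a ∈ S'.toLeft := by
            have := Finset.mem_coe.1 ha
            rw [hSA] at this
            simp only [Finset.mem_union, Finset.mem_insert, Finset.mem_singleton] at this
            rcases this with h | h | h
            · exact h
            exacts [absurd h hau, absurd h hav]
          obtain ⟨y, hy, hady⟩ := hTF.2 (inl a)
            (Finset.mem_coe.2 (Finset.mem_toLeft.1 haL))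
          cases y with
          | inl b =>
            refine ⟨b, ?_, (adj_inl_inl.1 hady).1⟩
            have : b ∈ S'.toLeft := Finset.mem_toLeft.2 (Finset.mem_coe.1 hy)
            exact Finset.mem_coe.2 (Finset.mem_union_left _ this)
          | inr i =>
            rw [adj_inl_inr] at hady
            rcases hady with ⟨e, _⟩ | ⟨e, _⟩
            exacts [absurd e hau, absurd e hav]

end DirB


section Final

open Sum

variable {V : Type*}

/-- Reversing the subdivision path gives an isomorphism. -/
def subdivSymmIso (G : SimpleGraph V) (u v : V) (m : ℕ) :
    subdivideEdge G v u m ≃g subdivideEdge G u v m where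
  toEquiv := Equiv.sumCongr (Equiv.refl V) (Fin.revPerm)
  map_rel_iff' := by
    rintro (a | i) (b | j) <;>
      simp only [Equiv.sumCongr_apply, Sum.map_inl, Sum.map_inr, Equiv.refl_apply,
        Fin.revPerm_apply, adj_inl_inl, adj_inl_inr, adj_inr_inl, adj_inr_inr]
    · constructor
      · rintro ⟨h1, h2, h3⟩; exact ⟨h1, h3, h2⟩
      · rintro ⟨h1, h2, h3⟩; exact ⟨h1, h3, h2⟩
    · have hj := j.isLt
      rw [Fin.val_rev]
      constructor
      · rintro (⟨rfl, h⟩ | ⟨rfl, h⟩)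
        · exact Or.inr ⟨rfl, by omega⟩
        · exact Or.inl ⟨rfl, by omega⟩
      · rintro (⟨rfl, h⟩ | ⟨rfl, h⟩)
        · exact Or.inr ⟨rfl, by omega⟩
        · exact Or.inl ⟨rfl, by omega⟩
    · have hi := i.isLt
      rw [Fin.val_rev]
      constructor
      · rintro (⟨rfl, h⟩ | ⟨rfl, h⟩)
        · exact Or.inr ⟨rfl, by omega⟩
        · exact Or.inl ⟨rfl, by omega⟩
      · rintro (⟨rfl, h⟩ | ⟨rfl, h⟩)
        · exact Or.inr ⟨rfl, by omega⟩
        · exact Or.inl ⟨rfl, by omega⟩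
    · have hi := i.isLt
      have hj := j.isLt
      rw [Fin.val_rev, Fin.val_rev]
      omega

theorem helper [Fintype V] (G : SimpleGraph V) (hiso : ∀ x : V, ∃ y : V, G.Adj x y)
    (u v : V) (huv : G.Adj u v)
    (hdeg : ∀ a b, G.Adj u a → G.Adj u b → a ≠ v → b ≠ v → a = b)
    (m : ℕ) (hm : 0 < m) :
    totalForcingNumber G = totalForcingNumber (subdivideEdge G u v m) := by
  classical
  have hne1 : {n : ℕ | ∃ S : Finset V, S.card = n ∧ IsTotalForcingSet G ↑S}.Nonempty := by
    refine ⟨Finset.univ.card, Finset.univ, rfl, fun x => .mem (by simp), fun x _ => ?_⟩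
    obtain ⟨y, hy⟩ := hiso x
    exact ⟨y, by simp, hy⟩
  have hiso' : ∀ z : V ⊕ Fin m, ∃ y, (subdivideEdge G u v m).Adj z y := by
    rintro (a | i)
    · obtain ⟨y, hy⟩ := hiso a
      by_cases h1 : a = u ∧ y = v
      · exact ⟨inr ⟨0, hm⟩, adj_inl_inr.2 (Or.inl ⟨h1.1, rfl⟩)⟩
      · by_cases h2 : a = v ∧ y = u
        · exact ⟨inr ⟨m - 1, by omega⟩, adj_inl_inr.2 (Or.inr ⟨h2.1, rfl⟩)⟩
        · exact ⟨inl y, adj_inl_inl.2 ⟨hy, h1, h2⟩⟩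
    · by_cases h : (i : ℕ) = 0
      · exact ⟨inl u, adj_inr_inl.2 (Or.inl ⟨rfl, h⟩)⟩
      · have hi := i.isLt
        refine ⟨inr ⟨(i : ℕ) - 1, by omega⟩, adj_inr_inr.2 (Or.inr ?_)⟩
        simp only [Fin.val_mk]
        omega
  have hne2 : {n : ℕ | ∃ S : Finset (V ⊕ Fin m), S.card = n ∧
      IsTotalForcingSet (subdivideEdge G u v m) ↑S}.Nonempty := by
    refine ⟨Finset.univ.card, Finset.univ, rfl, fun x => .mem (by simp), fun x _ => ?_⟩
    obtain ⟨y, hy⟩ := hiso' x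
    exact ⟨y, by simp, hy⟩
  apply le_antisymm
  · obtain ⟨S', hc, hTF'⟩ := Nat.sInf_mem hne2
    obtain ⟨S, hle, hTF⟩ := dirB huv hm S' hTF'
    calc totalForcingNumber G ≤ S.card := Nat.sInf_le ⟨S, rfl, hTF⟩
      _ ≤ S'.card := hle
      _ = totalForcingNumber (subdivideEdge G u v m) := hc
  · obtain ⟨S, hc, hTF⟩ := Nat.sInf_mem hne1
    obtain ⟨S', hle, hTF'⟩ := dirA huv hm hdeg S hTF
    calc totalForcingNumber (subdivideEdge G u v m) ≤ S'.card :=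
        Nat.sInf_le ⟨S', rfl, hTF'⟩
      _ ≤ S.card := hle
      _ = totalForcingNumber G := hc

theorem degconv [Fintype V] {G : SimpleGraph V} {u v : V} (huv : G.Adj u v)
    (h : (G.neighborSet u).ncard ≤ 2) :
    ∀ a b, G.Adj u a → G.Adj u b → a ≠ v → b ≠ v → a = b := by
  intro a b ha hb hav hbv
  by_contra hab
  have hsub : ({v, a, b} : Set V) ⊆ G.neighborSet u := by
    intro x hx
    rcases hx with rfl | rfl | rfl
    exacts [huv, ha, hb]
  have hfin : (G.neighborSet u).Finite := Set.toFinite _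
  have h3 : ({v, a, b} : Set V).ncard = 3 := by
    rw [Set.ncard_insert_of_notMem (by simp [Ne.symm hav, Ne.symm hbv]) (Set.toFinite _),
      Set.ncard_insert_of_notMem (by simp [hab]) (Set.toFinite _), Set.ncard_singleton]
  have hle := Set.ncard_le_ncard hsub hfin
  omega

end Final


/-- Let `G` be a graph with no isolated vertices containing an edge
`uv` incident with a vertex of degree at most `2`. If `G'` is obtained from `G` by
subdividing this edge any (positive) number of times, then `F_t(G) = F_t(G')`. -/
theorem stmt15 {V : Type*} [Fintype V] (G : SimpleGraph V)
    (hiso : ∀ x : V, ∃ y : V, G.Adj x y)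
    (u v : V) (huv : G.Adj u v)
    (hdeg : (G.neighborSet u).ncard ≤ 2 ∨ (G.neighborSet v).ncard ≤ 2)
    (m : ℕ) (hm : 1 ≤ m) :
    totalForcingNumber G = totalForcingNumber (subdivideEdge G u v m) := by
  rcases hdeg with h | h
  · exact helper G hiso u v huv (degconv huv h) m hm
  · have h1 := helper G hiso v u huv.symm (degconv huv.symm h) m hm
    rw [h1]
    exact totalForcingNumber_eq_of_iso (subdivSymmIso G u v m)
end TotalForcing
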